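/- If S is an LPDS of the king grid with partner map m, and v ∈ S is in a far pair (i.e., |N(v) ∩ N(m(v))| = 2, meaning v and m(v) are diagonal neighbors), then P(v) = N(v) \ N[m(v)] contains at least one vertex that is either in S or has at least 3 neighbors in S. -/

import Mathlib

/-- The king grid on `ℤ × ℤ`: distinct vertices are adjacent iff both
coordinates differ by at most 1 (equivalently, Euclidean distance ≤ √2). -/
def kingGrid : SimpleGraph (ℤ × ℤ) where
  Adj u v := u ≠ v ∧ |u.1 - v.1| ≤ 1 ∧ |u.2 - v.2| ≤ 1
  symm := ⟨by
    rintro u v ⟨h, h1, h2⟩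
    refine ⟨h.symm, ?_, ?_⟩ <;> rw [abs_sub_comm] <;> assumption⟩
  loopless := ⟨fun v h => h.1 rfl⟩

/-- Open neighborhood in the king grid. -/
def N (v : ℤ × ℤ) : Set (ℤ × ℤ) := kingGrid.neighborSet v

/-- Closed neighborhood in the king grid. -/
def Ncl (v : ℤ × ℤ) : Set (ℤ × ℤ) := insert v (kingGrid.neighborSet v)

/-- `S` is a dominating set of the king grid. -/
def IsDominating (S : Set (ℤ × ℤ)) : Prop := ∀ u : ℤ × ℤ, (Ncl u ∩ S).Nonempty

/-- `S` is locating: distinct vertices outside `S` have distinct neighborhoods in `S`. -/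
def IsLocating (S : Set (ℤ × ℤ)) : Prop :=
  ∀ u v : ℤ × ℤ, u ∉ S → v ∉ S → u ≠ v → N u ∩ S ≠ N v ∩ S

/-- `m` is the partner map of a perfect matching of the induced subgraph on `S`. -/
def IsPartnerMap (S : Set (ℤ × ℤ)) (m : ℤ × ℤ → ℤ × ℤ) : Prop :=
  ∀ v ∈ S, m v ∈ S ∧ kingGrid.Adj v (m v) ∧ m (m v) = v

/-- `S` is a locating-paired-dominating set with matching partner map `m`. -/
def IsLPDS (S : Set (ℤ × ℤ)) (m : ℤ × ℤ → ℤ × ℤ) : Prop :=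
  IsDominating S ∧ IsLocating S ∧ IsPartnerMap S m

/-- Pendant neighbors of `v` (relative to the partner map `m`). -/
def P (m : ℤ × ℤ → ℤ × ℤ) (v : ℤ × ℤ) : Set (ℤ × ℤ) := N v \ Ncl (m v)

/-- Interval neighbors of `v` (relative to the partner map `m`). -/
def I (m : ℤ × ℤ → ℤ × ℤ) (v : ℤ × ℤ) : Set (ℤ × ℤ) := N v ∩ N (m v)

lemma mem_N_iff {u x : ℤ × ℤ} : x ∈ N u ↔ ¬(u.1 = x.1 ∧ u.2 = x.2) ∧
    -1 ≤ u.1 - x.1 ∧ u.1 - x.1 ≤ 1 ∧ -1 ≤ u.2 - x.2 ∧ u.2 - x.2 ≤ 1 := by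
  simp [N, kingGrid, SimpleGraph.mem_neighborSet, Prod.ext_iff, abs_le, ne_eq]
  tauto

lemma mem_Ncl_iff {u x : ℤ × ℤ} : x ∈ Ncl u ↔ (x.1 = u.1 ∧ x.2 = u.2) ∨
    (¬(u.1 = x.1 ∧ u.2 = x.2) ∧ -1 ≤ u.1 - x.1 ∧ u.1 - x.1 ≤ 1 ∧ -1 ≤ u.2 - x.2 ∧ u.2 - x.2 ≤ 1) := by
  rw [Ncl, Set.mem_insert_iff, Prod.ext_iff]
  rw [show kingGrid.neighborSet u = N u from rfl, mem_N_iff]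

lemma N_fin (u : ℤ × ℤ) : (N u).Finite := by
  apply Set.Finite.subset ((Set.finite_Icc (u.1-1) (u.1+1)).prod (Set.finite_Icc (u.2-1) (u.2+1)))
  intro x hx
  rw [mem_N_iff] at hx
  simp only [Set.mem_prod, Set.mem_Icc]
  omega

lemma eq_pair {u s v : ℤ × ℤ} {S : Set (ℤ × ℤ)} (hv : v ∈ N u ∩ S) (hs : s ∈ N u ∩ S)
    (hne : v ≠ s) (hcard : (N u ∩ S).ncard ≤ 2) : N u ∩ S = {v, s} := by
  have hfin : (N u ∩ S).Finite := (N_fin u).inter_of_left _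
  refine (Set.eq_of_subset_of_ncard_le ?_ ?_ hfin).symm
  · rintro x (rfl | rfl)
    · exact hv
    · exact hs
  · rw [Set.ncard_pair hne]; exact hcard

lemma loc_contra {S : Set (ℤ × ℤ)} {m : ℤ × ℤ → ℤ × ℤ} (h : IsLPDS S m) {u u' v s : ℤ × ℤ}
    (hu : u ∉ S) (hu' : u' ∉ S) (huu : u ≠ u')
    (hc : (N u ∩ S).ncard ≤ 2) (hc' : (N u' ∩ S).ncard ≤ 2)
    (hvS : v ∈ S) (hsS : s ∈ S) (hvs : v ≠ s)
    (h1 : v ∈ N u) (h2 : s ∈ N u) (h3 : v ∈ N u') (h4 : s ∈ N u') : False := by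
  have e1 := eq_pair ⟨h1, hvS⟩ ⟨h2, hsS⟩ hvs hc
  have e2 := eq_pair ⟨h3, hvS⟩ ⟨h4, hsS⟩ hvs hc'
  exact h.2.1 u u' hu hu' huu (e1.trans e2.symm)


lemma N_symm {u x : ℤ × ℤ} (h : x ∈ N u) : u ∈ N x := kingGrid.adj_symm h

section helpers
variable {a b e1 e2 s1 s2 : ℤ}

lemma mem1 (he1 : e1 = 1 ∨ e1 = -1) (he2 : e2 = 1 ∨ e2 = -1) : ((a, b - e2) : ℤ × ℤ) ∈ N (a, b) := by
  rw [mem_N_iff]; simp only; omega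
lemma mem2 (he1 : e1 = 1 ∨ e1 = -1) (he2 : e2 = 1 ∨ e2 = -1) : ((a - e1, b) : ℤ × ℤ) ∈ N (a, b) := by
  rw [mem_N_iff]; simp only; omega
lemma mem3 (he1 : e1 = 1 ∨ e1 = -1) (he2 : e2 = 1 ∨ e2 = -1) : ((a - e1, b - e2) : ℤ × ℤ) ∈ N (a, b) := by
  rw [mem_N_iff]; simp only; omega
lemma mem4 (he1 : e1 = 1 ∨ e1 = -1) (he2 : e2 = 1 ∨ e2 = -1) : ((a - e1, b + e2) : ℤ × ℤ) ∈ N (a, b) := by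
  rw [mem_N_iff]; simp only; omega
lemma mem5 (he1 : e1 = 1 ∨ e1 = -1) (he2 : e2 = 1 ∨ e2 = -1) : ((a + e1, b - e2) : ℤ × ℤ) ∈ N (a, b) := by
  rw [mem_N_iff]; simp only; omega

lemma nmem1 (he1 : e1 = 1 ∨ e1 = -1) (he2 : e2 = 1 ∨ e2 = -1) : ((a, b - e2) : ℤ × ℤ) ∉ Ncl (a + e1, b + e2) := by
  rw [mem_Ncl_iff]; simp only; omega
lemma nmem2 (he1 : e1 = 1 ∨ e1 = -1) (he2 : e2 = 1 ∨ e2 = -1) : ((a - e1, b) : ℤ × ℤ) ∉ Ncl (a + e1, b + e2) := by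
  rw [mem_Ncl_iff]; simp only; omega
lemma nmem3 (he1 : e1 = 1 ∨ e1 = -1) (he2 : e2 = 1 ∨ e2 = -1) : ((a - e1, b - e2) : ℤ × ℤ) ∉ Ncl (a + e1, b + e2) := by
  rw [mem_Ncl_iff]; simp only; omega
lemma nmem4 (he1 : e1 = 1 ∨ e1 = -1) (he2 : e2 = 1 ∨ e2 = -1) : ((a - e1, b + e2) : ℤ × ℤ) ∉ Ncl (a + e1, b + e2) := by
  rw [mem_Ncl_iff]; simp only; omega
lemma nmem5 (he1 : e1 = 1 ∨ e1 = -1) (he2 : e2 = 1 ∨ e2 = -1) : ((a + e1, b - e2) : ℤ × ℤ) ∉ Ncl (a + e1, b + e2) := by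
  rw [mem_Ncl_iff]; simp only; omega

lemma ne12 (he1 : e1 = 1 ∨ e1 = -1) (he2 : e2 = 1 ∨ e2 = -1) : ((a, b - e2) : ℤ × ℤ) ≠ (a - e1, b) := by
  simp only [ne_eq, Prod.mk.injEq, not_and]; omega
lemma ne13 (he1 : e1 = 1 ∨ e1 = -1) (he2 : e2 = 1 ∨ e2 = -1) : ((a, b - e2) : ℤ × ℤ) ≠ (a - e1, b - e2) := by
  simp only [ne_eq, Prod.mk.injEq, not_and]; omega
lemma ne15 (he1 : e1 = 1 ∨ e1 = -1) (he2 : e2 = 1 ∨ e2 = -1) : ((a, b - e2) : ℤ × ℤ) ≠ (a + e1, b - e2) := by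
  simp only [ne_eq, Prod.mk.injEq, not_and]; omega
lemma ne23 (he1 : e1 = 1 ∨ e1 = -1) (he2 : e2 = 1 ∨ e2 = -1) : ((a - e1, b) : ℤ × ℤ) ≠ (a - e1, b - e2) := by
  simp only [ne_eq, Prod.mk.injEq, not_and]; omega
lemma ne24 (he1 : e1 = 1 ∨ e1 = -1) (he2 : e2 = 1 ∨ e2 = -1) : ((a - e1, b) : ℤ × ℤ) ≠ (a - e1, b + e2) := by
  simp only [ne_eq, Prod.mk.injEq, not_and]; omega

lemma nev (he1 : e1 = 1 ∨ e1 = -1) (he2 : e2 = 1 ∨ e2 = -1) (hne : ¬(s1 = a ∧ s2 = b)) :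
    ((a, b) : ℤ × ℤ) ≠ (s1, s2) := by
  simp only [ne_eq, Prod.mk.injEq, not_and]; omega

lemma split1 (he1 : e1 = 1 ∨ e1 = -1) (he2 : e2 = 1 ∨ e2 = -1)
    (hne : ¬(s1 = a ∧ s2 = b)) (h3 : ¬(s1 = a - e1 ∧ s2 = b - e2))
    (h5 : ¬(s1 = a + e1 ∧ s2 = b - e2)) (hsN : ((s1, s2) : ℤ × ℤ) ∈ N (a, b - e2)) :
    ((s1, s2) : ℤ × ℤ) ∈ N (a - e1, b - e2) ∨ ((s1, s2) : ℤ × ℤ) ∈ N (a + e1, b - e2) := by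
  rw [mem_N_iff] at hsN ⊢
  rw [mem_N_iff]
  simp only at *
  omega

lemma split2 (he1 : e1 = 1 ∨ e1 = -1) (he2 : e2 = 1 ∨ e2 = -1)
    (hne : ¬(s1 = a ∧ s2 = b)) (h3 : ¬(s1 = a - e1 ∧ s2 = b - e2))
    (h4 : ¬(s1 = a - e1 ∧ s2 = b + e2)) (hsN : ((s1, s2) : ℤ × ℤ) ∈ N (a - e1, b)) :
    ((s1, s2) : ℤ × ℤ) ∈ N (a - e1, b - e2) ∨ ((s1, s2) : ℤ × ℤ) ∈ N (a - e1, b + e2) := by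
  rw [mem_N_iff] at hsN ⊢
  rw [mem_N_iff]
  simp only at *
  omega

end helpers

lemma core (S : Set (ℤ × ℤ)) (m : ℤ × ℤ → ℤ × ℤ) (h : IsLPDS S m) (a b e1 e2 : ℤ)
    (he1 : e1 = 1 ∨ e1 = -1) (he2 : e2 = 1 ∨ e2 = -1)
    (hv : (a, b) ∈ S) (hw : m (a, b) = (a + e1, b + e2)) :
    ∃ u ∈ P m (a, b), u ∈ S ∨ 3 ≤ (N u ∩ S).ncard := by
  by_contra hcon
  push_neg at hcon
  have hP : ∀ u : ℤ × ℤ, u ∈ N (a, b) → u ∉ Ncl (a + e1, b + e2) →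
      u ∉ S ∧ (N u ∩ S).ncard ≤ 2 := by
    intro u h1 h2
    have := hcon u ⟨h1, by rw [hw]; exact h2⟩
    exact ⟨this.1, by omega⟩
  have hP1 := hP _ (mem1 he1 he2) (nmem1 he1 he2)
  have hP2 := hP _ (mem2 he1 he2) (nmem2 he1 he2)
  have hP3 := hP _ (mem3 he1 he2) (nmem3 he1 he2)
  have hP4 := hP _ (mem4 he1 he2) (nmem4 he1 he2)
  have hP5 := hP _ (mem5 he1 he2) (nmem5 he1 he2)
  clear hP hcon
  have claim1 : N (a, b - e2) ∩ S = {((a : ℤ), (b : ℤ))} := by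
    rw [Set.eq_singleton_iff_unique_mem]
    refine ⟨⟨N_symm (mem1 he1 he2), hv⟩, ?_⟩
    rintro ⟨s1, s2⟩ ⟨hsN, hsS⟩
    by_contra hne
    rw [Prod.ext_iff] at hne
    simp only at hne
    have hs3 : ¬(s1 = a - e1 ∧ s2 = b - e2) := by
      rintro ⟨rfl, rfl⟩; exact hP3.1 hsS
    have hs5 : ¬(s1 = a + e1 ∧ s2 = b - e2) := by
      rintro ⟨rfl, rfl⟩; exact hP5.1 hsS
    rcases split1 he1 he2 hne hs3 hs5 hsN with hs | hs
    · exact loc_contra h hP1.1 hP3.1 (ne13 he1 he2) hP1.2 hP3.2 hv hsS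
        (nev he1 he2 hne) (N_symm (mem1 he1 he2)) hsN (N_symm (mem3 he1 he2)) hs
    · exact loc_contra h hP1.1 hP5.1 (ne15 he1 he2) hP1.2 hP5.2 hv hsS
        (nev he1 he2 hne) (N_symm (mem1 he1 he2)) hsN (N_symm (mem5 he1 he2)) hs
  have claim2 : N (a - e1, b) ∩ S = {((a : ℤ), (b : ℤ))} := by
    rw [Set.eq_singleton_iff_unique_mem]
    refine ⟨⟨N_symm (mem2 he1 he2), hv⟩, ?_⟩
    rintro ⟨s1, s2⟩ ⟨hsN, hsS⟩
    by_contra hne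
    rw [Prod.ext_iff] at hne
    simp only at hne
    have hs3 : ¬(s1 = a - e1 ∧ s2 = b - e2) := by
      rintro ⟨rfl, rfl⟩; exact hP3.1 hsS
    have hs4 : ¬(s1 = a - e1 ∧ s2 = b + e2) := by
      rintro ⟨rfl, rfl⟩; exact hP4.1 hsS
    rcases split2 he1 he2 hne hs3 hs4 hsN with hs | hs
    · exact loc_contra h hP2.1 hP3.1 (ne23 he1 he2) hP2.2 hP3.2 hv hsS
        (nev he1 he2 hne) (N_symm (mem2 he1 he2)) hsN (N_symm (mem3 he1 he2)) hs
    · exact loc_contra h hP2.1 hP4.1 (ne24 he1 he2) hP2.2 hP4.2 hv hsS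
        (nev he1 he2 hne) (N_symm (mem2 he1 he2)) hsN (N_symm (mem4 he1 he2)) hs
  exact h.2.1 _ _ hP1.1 hP2.1 (ne12 he1 he2) (claim1.trans claim2.symm)

lemma three_common {a b e : ℤ} (he : e = 1 ∨ e = -1) :
    3 ≤ (N (a, b) ∩ N (a, b + e)).ncard := by
  have hfin : (N ((a : ℤ), (b : ℤ)) ∩ N (a, b + e)).Finite := (N_fin _).inter_of_left _
  have hsub : ({(a - 1, b), (a + 1, b), (a - 1, b + e)} : Set (ℤ × ℤ)) ⊆
      N (a, b) ∩ N (a, b + e) := by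
    rintro x (rfl | rfl | rfl) <;>
      exact ⟨by rw [mem_N_iff]; simp only; omega, by rw [mem_N_iff]; simp only; omega⟩
  have h3 : ({((a : ℤ) - 1, (b : ℤ)), (a + 1, b), (a - 1, b + e)} : Set (ℤ × ℤ)).ncard = 3 := by
    rw [Set.ncard_eq_three]
    exact ⟨_, _, _, by simp only [ne_eq, Prod.mk.injEq, not_and]; omega,
      by simp only [ne_eq, Prod.mk.injEq, not_and]; omega,
      by simp only [ne_eq, Prod.mk.injEq, not_and]; omega, rfl⟩
  calc 3 = _ := h3.symm
    _ ≤ _ := Set.ncard_le_ncard hsub hfin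

lemma three_common' {a b e : ℤ} (he : e = 1 ∨ e = -1) :
    3 ≤ (N (a, b) ∩ N (a + e, b)).ncard := by
  have hfin : (N ((a : ℤ), (b : ℤ)) ∩ N (a + e, b)).Finite := (N_fin _).inter_of_left _
  have hsub : ({(a, b - 1), (a, b + 1), (a + e, b - 1)} : Set (ℤ × ℤ)) ⊆
      N (a, b) ∩ N (a + e, b) := by
    rintro x (rfl | rfl | rfl) <;>
      exact ⟨by rw [mem_N_iff]; simp only; omega, by rw [mem_N_iff]; simp only; omega⟩
  have h3 : ({((a : ℤ), (b : ℤ) - 1), (a, b + 1), (a + e, b - 1)} : Set (ℤ × ℤ)).ncard = 3 := by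
    rw [Set.ncard_eq_three]
    exact ⟨_, _, _, by simp only [ne_eq, Prod.mk.injEq, not_and]; omega,
      by simp only [ne_eq, Prod.mk.injEq, not_and]; omega,
      by simp only [ne_eq, Prod.mk.injEq, not_and]; omega, rfl⟩
  calc 3 = _ := h3.symm
    _ ≤ _ := Set.ncard_le_ncard hsub hfin

theorem lpds_far_pair_pendant (S : Set (ℤ × ℤ)) (m : ℤ × ℤ → ℤ × ℤ)
    (h : IsLPDS S m) (v : ℤ × ℤ) (hv : v ∈ S)
    (hfar : (N v ∩ N (m v)).ncard = 2) :
    ∃ u ∈ P m v, u ∈ S ∨ 3 ≤ (N u ∩ S).ncard := by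
  obtain ⟨a, b⟩ := v
  obtain ⟨hmS, hadj, hmm⟩ := h.2.2 (a, b) hv
  obtain ⟨hne, hab1, hab2⟩ := hadj
  set c := (m (a, b)).1 with hc
  set d := (m (a, b)).2 with hd
  have hmv : m (a, b) = (c, d) := rfl
  rw [hmv, ne_eq, Prod.ext_iff] at hne
  simp only at hne hab1 hab2
  rw [abs_le] at hab1 hab2
  have he1 : c - a = 1 ∨ c - a = -1 := by
    rcases eq_or_ne c a with hca | hca
    · exfalso
      have he2 : d - b = 1 ∨ d - b = -1 := by omega
      have := three_common (a := a) (b := b) he2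
      rw [show ((a : ℤ), b + (d - b)) = (c, d) by rw [Prod.ext_iff]; constructor <;> simp <;> omega] at this
      rw [hmv] at hfar
      omega
    · omega
  have he2 : d - b = 1 ∨ d - b = -1 := by
    rcases eq_or_ne d b with hdb | hdb
    · exfalso
      have := three_common' (a := a) (b := b) he1
      rw [show ((a : ℤ) + (c - a), b) = (c, d) by rw [Prod.ext_iff]; constructor <;> simp <;> omega] at this
      rw [hmv] at hfar
      omega
    · omega
  exact core S m h a b (c - a) (d - b) he1 he2 hv
    (by rw [hmv, Prod.ext_iff]; constructor <;> simp)
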